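/- (Completeness) For every finite set A = {(x₁, u₁), …, (x_k, u_k)} of simulation scenarios for a DES H, there exists a finite simulation campaign Ξ = (x₀, M₀, χ) for the simulator S such that T_Ξ = ⋃_{i=1}^{k} T_{(xᵢ, uᵢ)}, i.e., the set of transitions explored by the campaign is exactly the union of the sets of transitions of the scenarios in A. -/

import Mathlib

noncomputable section

/-- The discrete impulse `δ : ℝ → ℝ`, with `δ 0 = 1` and `δ t = 0` for `t ≠ 0`. -/
def dirac (t : ℝ) : ℝ := if t = 0 then 1 else 0

/-- `u : ℝ → ℝ` is a discrete event sequence over `U` (viewed as a function on `ℝ≥0`):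
its values at nonnegative times lie in `U`, and it is nonzero at only finitely many
nonnegative times. -/
def IsDiscreteEventSeq (U : Set ℝ) (u : ℝ → ℝ) : Prop :=
  (∀ t : ℝ, 0 ≤ t → u t ∈ U) ∧ {t : ℝ | 0 ≤ t ∧ u t ≠ 0}.Finite

/-- `(n, p, τ)` is an impulse decomposition of `u` over `U`:
`u t = p 0 • δ t + ∑ i = 1..n, p i • δ (t - ∑ k < i, τ k)` for all `t ≥ 0`,
where `p 0 ∈ U`, `p 1, …, p n ∈ U \ {0}` and the `τ k` (`k < n`) are positive. -/
def IsImpulseDecomp (U : Set ℝ) (u : ℝ → ℝ) (n : ℕ) (p τ : ℕ → ℝ) : Prop :=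
  (∀ i ≤ n, p i ∈ U) ∧ (∀ i, 1 ≤ i → i ≤ n → p i ≠ 0) ∧ (∀ k < n, 0 < τ k) ∧
  ∀ t : ℝ, 0 ≤ t →
    u t = p 0 * dirac t + ∑ i ∈ Finset.Icc 1 n, p i * dirac (t - ∑ k ∈ Finset.range i, τ k)

/-- A discrete event system (DES) `H = (X, U, Y, φ, ψ)`.  The transition map
`φ` takes a (nonnegative) time duration, a state, and an input signal
(a function `ℝ → ℝ`, thought of as acting on the time interval `[0, d)`),
and returns a state.  It satisfies:
* consistency: `φ 0 x u = x`;
* semigroup: running for `d₁ + d₂` along `ω` is the same as running for `d₁`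
  along `ω` and then for `d₂` along the left-shift of `ω` by `d₁`
  (i.e. along the second half of the concatenation);
* causality: `φ d x ω` only depends on the restriction of `ω` to `[0, d)`. -/
structure DES (X Y : Type*) (U : Set ℝ) where
  φ : ℝ → X → (ℝ → ℝ) → X
  ψ : ℝ → X → Y
  consistency : ∀ (x : X) (u : ℝ → ℝ), φ 0 x u = x
  semigroup : ∀ (d₁ d₂ : ℝ), 0 < d₁ → 0 < d₂ → ∀ (x : X) (ω : ℝ → ℝ),
      φ (d₁ + d₂) x ω = φ d₂ (φ d₁ x ω) (fun t => ω (t + d₁))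
  causal : ∀ (d : ℝ) (x : X) (ω ω' : ℝ → ℝ),
      (∀ t : ℝ, 0 ≤ t → t < d → ω t = ω' t) → φ d x ω = φ d x ω'

/-- Simulator commands. -/
inductive Cmd (X : Type*) where
  | load : X → Cmd X
  | store : Cmd X
  | free : X → Cmd X
  | run : ℝ → ℝ → Cmd X

/-- Well-formed command: the arguments of `run p τ` satisfy `p ∈ U` and `τ > 0`. -/
def Cmd.WF {X : Type*} (U : Set ℝ) : Cmd X → Prop
  | .run p τ => p ∈ U ∧ 0 < τ
  | _ => True

/-- A command is normal if it is a `load` or a `run`. -/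
def Cmd.IsNormal {X : Type*} : Cmd X → Prop
  | .load _ => True
  | .run _ _ => True
  | _ => False

variable {X Y : Type*} {U : Set ℝ}

open Classical in

/-- The transition function `ξ` of the simulator: one (partial) step on a
simulator state `(x, M)`, where `M` is the simulator memory. -/
def simStep (H : DES X Y U) : X × Set X → Cmd X → Option (X × Set X)
  | (_x, M), .load x' => if x' ∈ M then some (x', M) else none
  | (x, M), .free x' => if x' ∈ M then some (x, M \ {x'}) else none
  | (x, M), .store => some (x, M ∪ {x})
  | (x, M), .run p τ => some (H.φ τ x (fun t => p * dirac t), M)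

/-- The sequence of simulator states of the simulation campaign `(x₀, M₀, χ)`:
`stateAt H x₀ M₀ χ j` is the simulator state after executing the first `j`
commands of `χ` (if all of them are defined). -/
def stateAt (H : DES X Y U) (x₀ : X) (M₀ : Set X) (χ : List (Cmd X)) :
    ℕ → Option (X × Set X)
  | 0 => some (x₀, M₀)
  | j + 1 => (stateAt H x₀ M₀ χ j).bind fun s => (χ[j]?).bind (simStep H s)

/-- The set `T_Ξ` of transitions explored by the simulation campaign
`Ξ = (x₀, M₀, χ)`: all `(x, p, τ, x')` such that at some position `j` the
simulator state is `(x, M)`, the `j`-th command is `run p τ`, and the run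
leads to `x' = φ τ x (p·δ)`. -/
def campTrans (H : DES X Y U) (x₀ : X) (M₀ : Set X) (χ : List (Cmd X)) :
    Set (X × ℝ × ℝ × X) :=
  {q | ∃ (j : ℕ) (x : X) (M : Set X) (p τ : ℝ),
    stateAt H x₀ M₀ χ j = some (x, M) ∧ χ[j]? = some (.run p τ) ∧
    q = (x, p, τ, H.φ τ x (fun t => p * dirac t))}

/-- The states `x₀ = x`, `x_{i+1} = φ (τ i) x_i (p i · δ)` visited by the trace of a
simulation scenario whose impulse decomposition has events `p` and delays `τ`. -/
def scenState (H : DES X Y U) (x : X) (p τ : ℕ → ℝ) : ℕ → X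
  | 0 => x
  | i + 1 => H.φ (τ i) (scenState H x p τ i) (fun t => p i * dirac t)

/-- The set of transitions of the trace determined by the impulse decomposition
data `(n, p, τ)`, started at `x`: the transitions
`(x_i, p i, τ i, x_{i+1})` for `i < n`, where `x_{i+1} = φ (τ i) x_i (p i · δ)`. -/
def traceTrans (H : DES X Y U) (x : X) (n : ℕ) (p τ : ℕ → ℝ) :
    Set (X × ℝ × ℝ × X) :=
  {q | ∃ i < n, q = (scenState H x p τ i, p i, τ i, scenState H x p τ (i + 1))}

/-- The set `T_(x,u)` of transitions of the simulation scenario `(x, u)`: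
the transitions of the trace arising from the (unique) impulse decomposition of `u`. -/
def scenTrans (H : DES X Y U) (x : X) (u : ℝ → ℝ) : Set (X × ℝ × ℝ × X) :=
  {q | ∃ (n : ℕ) (p τ : ℕ → ℝ), IsImpulseDecomp U u n p τ ∧ q ∈ traceTrans H x n p τ}


/-! ### Auxiliary lemmas -/

lemma dirac_apply_zero : dirac 0 = 1 := if_pos rfl

lemma dirac_of_ne {t : ℝ} (h : t ≠ 0) : dirac t = 0 := if_neg h

section Decomp

variable {U : Set ℝ} {u : ℝ → ℝ}

/-- Partial sums of delays. -/
private def psum (τ : ℕ → ℝ) (i : ℕ) : ℝ := ∑ k ∈ Finset.range i, τ k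

private lemma psum_mono {τ : ℕ → ℝ} {n : ℕ} (hτ : ∀ k < n, 0 < τ k)
    {i j : ℕ} (hij : i < j) (hjn : j ≤ n) : psum τ i < psum τ j := by
  have h1 : ∑ k ∈ Finset.Ico 0 i, τ k + ∑ k ∈ Finset.Ico i j, τ k
      = ∑ k ∈ Finset.Ico 0 j, τ k :=
    Finset.sum_Ico_consecutive τ (Nat.zero_le i) (le_of_lt hij)
  have h2 : 0 < ∑ k ∈ Finset.Ico i j, τ k := by
    apply Finset.sum_pos
    · intro k hk
      rw [Finset.mem_Ico] at hk
      exact hτ k (lt_of_lt_of_le hk.2 hjn)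
    · exact ⟨i, Finset.mem_Ico.2 ⟨le_refl i, hij⟩⟩
  simp only [psum, Finset.range_eq_Ico]
  linarith

private lemma psum_pos {τ : ℕ → ℝ} {n : ℕ} (hτ : ∀ k < n, 0 < τ k)
    {j : ℕ} (hj1 : 1 ≤ j) (hjn : j ≤ n) : 0 < psum τ j := by
  have := psum_mono hτ (i := 0) (Nat.lt_of_lt_of_le hj1 (le_refl j)) hjn
  simpa [psum] using this

/-- Evaluation facts derived from an impulse decomposition. -/
private lemma decomp_eval {n : ℕ} {p τ : ℕ → ℝ} (hd : IsImpulseDecomp U u n p τ) :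
    u 0 = p 0 ∧ (∀ j, 1 ≤ j → j ≤ n → u (psum τ j) = p j) ∧
    (∀ t, 0 < t → u t ≠ 0 → ∃ j, 1 ≤ j ∧ j ≤ n ∧ t = psum τ j) := by
  obtain ⟨hpU, hpne, hτ, hform⟩ := hd
  have hform' : ∀ t : ℝ, 0 ≤ t →
      u t = p 0 * dirac t + ∑ i ∈ Finset.Icc 1 n, p i * dirac (t - psum τ i) := hform
  refine ⟨?_, ?_, ?_⟩
  · rw [hform' 0 le_rfl, dirac_apply_zero]
    have : ∀ i ∈ Finset.Icc 1 n, p i * dirac (0 - psum τ i) = 0 := by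
      intro i hi
      rw [Finset.mem_Icc] at hi
      have := psum_pos hτ hi.1 hi.2
      rw [dirac_of_ne (by linarith), mul_zero]
    rw [Finset.sum_eq_zero this]
    ring
  · intro j hj1 hjn
    have h0 : (0:ℝ) ≤ psum τ j := le_of_lt (psum_pos hτ hj1 hjn)
    rw [hform' _ h0]
    rw [dirac_of_ne (ne_of_gt (psum_pos hτ hj1 hjn)), mul_zero, zero_add]
    rw [Finset.sum_eq_single_of_mem j (Finset.mem_Icc.2 ⟨hj1, hjn⟩)]
    · rw [sub_self, dirac_apply_zero, mul_one]
    · intro i hi hij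
      rw [Finset.mem_Icc] at hi
      have hne : psum τ j - psum τ i ≠ 0 := by
        rcases lt_or_gt_of_ne hij with h | h
        · have := psum_mono hτ h hjn
          intro hc; linarith
        · have := psum_mono hτ h hi.2
          intro hc; linarith
      rw [dirac_of_ne hne, mul_zero]
  · intro t ht htne
    by_contra hcon
    push_neg at hcon
    apply htne
    rw [hform' t (le_of_lt ht), dirac_of_ne (ne_of_gt ht), mul_zero, zero_add]
    apply Finset.sum_eq_zero
    intro i hi
    rw [Finset.mem_Icc] at hi
    have : t - psum τ i ≠ 0 := by
      intro hc
      exact absurd (by linarith : t = psum τ i) (hcon i hi.1 hi.2)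
    rw [dirac_of_ne this, mul_zero]

/-- Uniqueness of impulse decompositions (on the relevant range). -/
private lemma decomp_unique {n m : ℕ} {p τ q σ : ℕ → ℝ}
    (h1 : IsImpulseDecomp U u n p τ) (h2 : IsImpulseDecomp U u m q σ) :
    n = m ∧ ∀ i < n, p i = q i ∧ τ i = σ i := by
  obtain ⟨e10, e1S, e1sup⟩ := decomp_eval h1
  obtain ⟨e20, e2S, e2sup⟩ := decomp_eval h2
  have hτ1 := h1.2.2.1
  have hτ2 := h2.2.2.1
  have hp1 := h1.2.1
  have hp2 := h2.2.1
  -- values of u at partial sums are nonzero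
  have hne1 : ∀ j, 1 ≤ j → j ≤ n → u (psum τ j) ≠ 0 := fun j hj1 hjn => by
    rw [e1S j hj1 hjn]; exact hp1 j hj1 hjn
  have hne2 : ∀ j, 1 ≤ j → j ≤ m → u (psum σ j) ≠ 0 := fun j hj1 hjm => by
    rw [e2S j hj1 hjm]; exact hp2 j hj1 hjm
  have key : ∀ i, i ≤ n → i ≤ m → psum τ i = psum σ i := by
    intro i
    induction i using Nat.strong_induction_on with
    | _ i ih =>
      intro hin him
      rcases Nat.eq_zero_or_pos i with rfl | hi
      · simp [psum]
      have hle1 : psum σ i ≤ psum τ i := by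
        obtain ⟨j, hj1, hjm, hje⟩ := e2sup (psum τ i) (psum_pos hτ1 hi hin)
          (hne1 i hi hin)
        by_cases hji : j < i
        · exfalso
          have heq : psum σ j = psum τ j :=
            (ih j hji (le_trans (le_of_lt hji) hin) (le_trans (le_of_lt hji) him)).symm
          have := psum_mono hτ1 hji hin
          rw [hje, heq] at *
          linarith
        · push_neg at hji
          rcases eq_or_lt_of_le hji with rfl | hlt
          · rw [hje]
          · have := psum_mono hτ2 hlt hjm
            rw [hje]; linarith
      have hle2 : psum τ i ≤ psum σ i := by
        obtain ⟨j, hj1, hjn, hje⟩ := e1sup (psum σ i) (psum_pos hτ2 hi him)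
          (hne2 i hi him)
        by_cases hji : j < i
        · exfalso
          have heq : psum τ j = psum σ j :=
            ih j hji (le_trans (le_of_lt hji) hin) (le_trans (le_of_lt hji) him)
          have := psum_mono hτ2 hji him
          rw [hje, heq] at *
          linarith
        · push_neg at hji
          rcases eq_or_lt_of_le hji with rfl | hlt
          · rw [hje]
          · have := psum_mono hτ1 hlt hjn
            rw [hje]; linarith
      linarith
  have hnm : n = m := by
    rcases lt_trichotomy n m with h | h | h
    · exfalso
      obtain ⟨j, hj1, hjn, hje⟩ := e1sup (psum σ m) (psum_pos hτ2 (by omega) le_rfl)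
        (hne2 m (by omega) le_rfl)
      have heq : psum τ j = psum σ j := key j hjn (le_trans hjn (le_of_lt h))
      have hlt : psum σ j < psum σ m := psum_mono hτ2 (by omega) le_rfl
      rw [hje, heq] at *
      linarith
    · exact h
    · exfalso
      obtain ⟨j, hj1, hjm, hje⟩ := e2sup (psum τ n) (psum_pos hτ1 (by omega) le_rfl)
        (hne1 n (by omega) le_rfl)
      have heq : psum σ j = psum τ j := (key j (le_trans hjm (le_of_lt h)) hjm).symm
      have hlt : psum τ j < psum τ n := psum_mono hτ1 (by omega) le_rfl
      rw [hje, heq] at *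
      linarith
  subst hnm
  refine ⟨rfl, fun i hi => ⟨?_, ?_⟩⟩
  · rcases Nat.eq_zero_or_pos i with rfl | hi1
    · rw [← e10, ← e20]
    · rw [← e1S i hi1 (le_of_lt hi), ← e2S i hi1 (le_of_lt hi),
        key i (le_of_lt hi) (le_of_lt hi)]
  · have hs1 : psum τ (i + 1) = psum τ i + τ i := Finset.sum_range_succ τ i
    have hs2 : psum σ (i + 1) = psum σ i + σ i := Finset.sum_range_succ σ i
    have k1 := key i (le_of_lt hi) (le_of_lt hi)
    have k2 := key (i + 1) hi hi
    rw [hs1, hs2, k1] at k2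
    linarith

/-- Existence of an impulse decomposition for a discrete event sequence. -/
private lemma exists_decomp (hu : IsDiscreteEventSeq U u) :
    ∃ (n : ℕ) (p τ : ℕ → ℝ), IsImpulseDecomp U u n p τ := by
  obtain ⟨hmem, hfin⟩ := hu
  classical
  set s : Finset ℝ := hfin.toFinset.filter (fun t => 0 < t) with hs
  have hsmem : ∀ t : ℝ, t ∈ s ↔ 0 < t ∧ u t ≠ 0 := by
    intro t
    simp only [hs, Finset.mem_filter, Set.Finite.mem_toFinset, Set.mem_setOf_eq]
    constructor
    · rintro ⟨⟨_, h2⟩, h3⟩; exact ⟨h3, h2⟩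
    · rintro ⟨h1, h2⟩; exact ⟨⟨le_of_lt h1, h2⟩, h1⟩
  set n := s.card with hn
  set e : Fin n ↪o ℝ := s.orderEmbOfFin hn.symm with he
  have hemem : ∀ i : Fin n, (e i) ∈ s := fun i => Finset.orderEmbOfFin_mem s hn.symm i
  set T : ℕ → ℝ := fun i => if h : 1 ≤ i ∧ i ≤ n then e ⟨i - 1, by omega⟩ else 0 with hT
  have hT0 : T 0 = 0 := by simp [hT]
  have hTval : ∀ i (h1 : 1 ≤ i) (h2 : i ≤ n), T i = e ⟨i - 1, by omega⟩ := by
    intro i h1 h2; simp [hT, h1, h2]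
  have hTmem : ∀ i, 1 ≤ i → i ≤ n → T i ∈ s := by
    intro i h1 h2; rw [hTval i h1 h2]; exact hemem _
  have hTpos : ∀ i, 1 ≤ i → i ≤ n → 0 < T i := fun i h1 h2 =>
    ((hsmem _).1 (hTmem i h1 h2)).1
  have hTne : ∀ i, 1 ≤ i → i ≤ n → u (T i) ≠ 0 := fun i h1 h2 =>
    ((hsmem _).1 (hTmem i h1 h2)).2
  have hTmono : ∀ i j, i < j → j ≤ n → T i < T j := by
    intro i j hij hjn
    rcases Nat.eq_zero_or_pos i with rfl | hi
    · rw [hT0]; exact hTpos j (by omega) hjn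
    · rw [hTval i hi (by omega), hTval j (by omega) hjn]
      exact e.strictMono (by simp [Fin.lt_def]; omega)
  have hTsurj : ∀ t ∈ s, ∃ i, 1 ≤ i ∧ i ≤ n ∧ T i = t := by
    intro t ht
    have : t ∈ Set.range e := by
      rw [he, Finset.range_orderEmbOfFin]; exact_mod_cast ht
    obtain ⟨j, hj⟩ := this
    refine ⟨j.1 + 1, by omega, by omega, ?_⟩
    rw [hTval _ (by omega) (by omega)]
    have hjj : (⟨j.1 + 1 - 1, by omega⟩ : Fin n) = j := by
      apply Fin.ext; simp
    rw [hjj]; exact hj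
  refine ⟨n, fun i => if i = 0 then u 0 else u (T i), fun k => T (k + 1) - T k,
    ?_, ?_, ?_, ?_⟩
  · intro i _
    by_cases h0 : i = 0
    · simp only [h0, if_pos rfl]; exact hmem 0 le_rfl
    · simp only [if_neg h0]
      by_cases h : 1 ≤ i ∧ i ≤ n
      · exact hmem _ (le_of_lt (hTpos i h.1 h.2))
      · exact hmem _ (by rw [hT]; simp [h])
  · intro i h1 h2
    simp only [Nat.pos_iff_ne_zero.mp h1, if_neg (by omega : ¬ i = 0)]
    exact hTne i h1 h2
  · intro k hk
    have := hTmono k (k + 1) (by omega) (by omega)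
    show 0 < T (k + 1) - T k
    linarith
  · intro t ht
    have hpsum : ∀ i, ∑ k ∈ Finset.range i, (T (k + 1) - T k) = T i := by
      intro i; rw [Finset.sum_range_sub T i, hT0, sub_zero]
    have hrw : ∀ i ∈ Finset.Icc 1 n,
        (if i = 0 then u 0 else u (T i)) * dirac (t - ∑ k ∈ Finset.range i, (T (k+1) - T k))
        = u (T i) * dirac (t - T i) := by
      intro i hi
      rw [Finset.mem_Icc] at hi
      rw [hpsum i, if_neg (by omega)]
    rw [Finset.sum_congr rfl hrw]
    rcases eq_or_lt_of_le ht with rfl | htpos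
    · have hz : ∀ i ∈ Finset.Icc 1 n, u (T i) * dirac (0 - T i) = 0 := by
        intro i hi
        rw [Finset.mem_Icc] at hi
        have hp := hTpos i hi.1 hi.2
        rw [dirac_of_ne (by intro hc; simp at hc; linarith), mul_zero]
      rw [dirac_apply_zero, mul_one, Finset.sum_eq_zero hz, add_zero]
      simp
    · rw [dirac_of_ne (ne_of_gt htpos), mul_zero, zero_add]
      by_cases hts : u t ≠ 0
      · obtain ⟨i0, hi01, hi0n, hi0⟩ := hTsurj t ((hsmem t).2 ⟨htpos, hts⟩)
        rw [Finset.sum_eq_single_of_mem i0 (Finset.mem_Icc.2 ⟨hi01, hi0n⟩)]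
        · rw [hi0, sub_self, dirac_apply_zero, mul_one]
        · intro i hi hii0
          rw [Finset.mem_Icc] at hi
          have : t - T i ≠ 0 := by
            rcases lt_trichotomy i i0 with h | h | h
            · have := hTmono i i0 h hi0n
              rw [← hi0] at *; intro hc; linarith
            · exact absurd h hii0
            · have := hTmono i0 i h hi.2
              rw [← hi0] at *; intro hc; linarith
          rw [dirac_of_ne this, mul_zero]
      · push_neg at hts
        rw [hts, Finset.sum_eq_zero]
        intro i hi
        rw [Finset.mem_Icc] at hi
        have : t - T i ≠ 0 := by
          intro hc
          have : t = T i := by linarith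
          subst this
          exact hTne i hi.1 hi.2 (by rw [hts])
        rw [dirac_of_ne this, mul_zero]

end Decomp

section Sim

variable {X Y : Type*} {U : Set ℝ}

private lemma scenState_congr (H : DES X Y U) (x : X) {n : ℕ} {p τ q σ : ℕ → ℝ}
    (h : ∀ i < n, p i = q i ∧ τ i = σ i) :
    ∀ i ≤ n, scenState H x p τ i = scenState H x q σ i := by
  intro i
  induction i with
  | zero => intro _; rfl
  | succ i ih =>
    intro hi
    have hlt : i < n := hi
    rw [scenState, scenState, ih (le_of_lt hlt), (h i hlt).1, (h i hlt).2]

private lemma traceTrans_congr (H : DES X Y U) (x : X) {n m : ℕ} {p τ q σ : ℕ → ℝ}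
    (hnm : n = m) (h : ∀ i < n, p i = q i ∧ τ i = σ i) :
    traceTrans H x n p τ = traceTrans H x m q σ := by
  subst hnm
  ext w
  simp only [traceTrans, Set.mem_setOf_eq]
  constructor
  · rintro ⟨i, hi, rfl⟩
    exact ⟨i, hi, by rw [scenState_congr H x h i (le_of_lt hi), (h i hi).1, (h i hi).2,
      scenState_congr H x h (i+1) hi]⟩
  · rintro ⟨i, hi, rfl⟩
    exact ⟨i, hi, by rw [scenState_congr H x h i (le_of_lt hi), (h i hi).1, (h i hi).2,
      scenState_congr H x h (i+1) hi]⟩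

private lemma scenTrans_eq (H : DES X Y U) (x : X) {u : ℝ → ℝ} {n : ℕ} {p τ : ℕ → ℝ}
    (hd : IsImpulseDecomp U u n p τ) :
    scenTrans H x u = traceTrans H x n p τ := by
  ext w
  simp only [scenTrans, Set.mem_setOf_eq]
  constructor
  · rintro ⟨m, q, σ, hd', hw⟩
    obtain ⟨hnm, hpt⟩ := decomp_unique hd' hd
    rwa [traceTrans_congr H x hnm hpt] at hw
  · intro h
    exact ⟨n, p, τ, hd, h⟩

private lemma stateAt_cons (H : DES X Y U) {x₀ : X} {M₀ : Set X} {c : Cmd X}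
    {s : X × Set X} (hc : simStep H (x₀, M₀) c = some s) (χ : List (Cmd X)) :
    ∀ j, stateAt H x₀ M₀ (c :: χ) (j + 1) = stateAt H s.1 s.2 χ j := by
  intro j
  induction j with
  | zero => simp [stateAt, hc]
  | succ j ih =>
    have h1 : stateAt H x₀ M₀ (c :: χ) (j + 1 + 1)
        = (stateAt H x₀ M₀ (c :: χ) (j + 1)).bind
            fun s' => (c :: χ)[j + 1]?.bind (simStep H s') := rfl
    have h2 : stateAt H s.1 s.2 χ (j + 1)
        = (stateAt H s.1 s.2 χ j).bind fun s' => χ[j]?.bind (simStep H s') := rfl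
    rw [h1, h2, ih, List.getElem?_cons_succ]

private lemma campTrans_cons_load (H : DES X Y U) {x₀ : X} {M₀ : Set X} {x' : X}
    (hx : x' ∈ M₀) (χ : List (Cmd X)) :
    campTrans H x₀ M₀ (Cmd.load x' :: χ) = campTrans H x' M₀ χ := by
  have hc : simStep H (x₀, M₀) (Cmd.load x') = some (x', M₀) := by
    simp [simStep, hx]
  ext w
  simp only [campTrans, Set.mem_setOf_eq]
  constructor
  · rintro ⟨j, x, M, p, τ, h1, h2, h3⟩
    cases j with
    | zero => simp at h2
    | succ j =>
      exact ⟨j, x, M, p, τ, by rwa [stateAt_cons H hc] at h1, by simpa using h2, h3⟩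
  · rintro ⟨j, x, M, p, τ, h1, h2, h3⟩
    exact ⟨j + 1, x, M, p, τ, by rw [stateAt_cons H hc]; exact h1, by simpa using h2, h3⟩

/-- The list of run commands determined by decomposition data. -/
private def runsList (X : Type*) (p τ : ℕ → ℝ) (n : ℕ) : List (Cmd X) :=
  (List.range n).map (fun j => Cmd.run (p j) (τ j))

private lemma stateAt_runs (H : DES X Y U) (x : X) (M : Set X) (p τ : ℕ → ℝ) (n : ℕ) :
    ∀ j ≤ n, stateAt H x M (runsList X p τ n) j = some (scenState H x p τ j, M) := by
  intro j
  induction j with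
  | zero => intro _; rfl
  | succ j ih =>
    intro hj
    have hjn : j < n := hj
    rw [stateAt, ih (le_of_lt hjn)]
    simp only [runsList, List.getElem?_map, List.getElem?_range hjn, Option.map_some,
      Option.bind_some, Option.bind_some]
    rfl

private lemma campTrans_runs (H : DES X Y U) (x : X) (M : Set X) (p τ : ℕ → ℝ) (n : ℕ) :
    campTrans H x M (runsList X p τ n) = traceTrans H x n p τ := by
  ext w
  simp only [campTrans, traceTrans, Set.mem_setOf_eq]
  constructor
  · rintro ⟨j, x_, M_, p_, τ_, h1, h2, h3⟩
    have hj : j < n := by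
      by_contra hj
      push_neg at hj
      rw [List.getElem?_eq_none (by simpa [runsList] using hj)] at h2
      simp at h2
    rw [stateAt_runs H x M p τ n j (le_of_lt hj)] at h1
    simp only [runsList, List.getElem?_map, List.getElem?_range hj, Option.map_some] at h2
    have hxM : x_ = scenState H x p τ j ∧ M_ = M := by
      have := Option.some.inj h1
      exact ⟨congrArg Prod.fst this.symm, congrArg Prod.snd this.symm⟩
    have hpτ : p_ = p j ∧ τ_ = τ j := by
      have := Option.some.inj h2
      cases this; exact ⟨rfl, rfl⟩
    refine ⟨j, hj, ?_⟩
    rw [h3, hxM.1, hpτ.1, hpτ.2]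
    rfl
  · rintro ⟨i, hi, rfl⟩
    refine ⟨i, scenState H x p τ i, M, p i, τ i,
      stateAt_runs H x M p τ n i (le_of_lt hi), ?_, rfl⟩
    simp [runsList, List.getElem?_map, List.getElem?_range hi]

private lemma stateAt_append_left (H : DES X Y U) (x₀ : X) (M₀ : Set X)
    (χ₁ χ₂ : List (Cmd X)) :
    ∀ j ≤ χ₁.length, stateAt H x₀ M₀ (χ₁ ++ χ₂) j = stateAt H x₀ M₀ χ₁ j := by
  intro j
  induction j with
  | zero => intro _; rfl
  | succ j ih =>
    intro hj
    have hjl : j < χ₁.length := hj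
    rw [stateAt, stateAt, ih (le_of_lt hjl), List.getElem?_append_left hjl]

private lemma stateAt_append_right (H : DES X Y U) {x₀ : X} {M₀ : Set X}
    {s : X × Set X} (χ₁ χ₂ : List (Cmd X))
    (h : stateAt H x₀ M₀ χ₁ χ₁.length = some s) :
    ∀ j, stateAt H x₀ M₀ (χ₁ ++ χ₂) (χ₁.length + j) = stateAt H s.1 s.2 χ₂ j := by
  intro j
  induction j with
  | zero =>
    rw [Nat.add_zero, stateAt_append_left H x₀ M₀ χ₁ χ₂ χ₁.length le_rfl, h]
    rfl
  | succ j ih =>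
    have : χ₁.length + (j + 1) = (χ₁.length + j) + 1 := rfl
    rw [this, stateAt, ih, stateAt]
    rw [List.getElem?_append_right (by omega), Nat.add_sub_cancel_left]

private lemma campTrans_append (H : DES X Y U) {x₀ : X} {M₀ : Set X}
    {s : X × Set X} (χ₁ χ₂ : List (Cmd X))
    (h : stateAt H x₀ M₀ χ₁ χ₁.length = some s) :
    campTrans H x₀ M₀ (χ₁ ++ χ₂) = campTrans H x₀ M₀ χ₁ ∪ campTrans H s.1 s.2 χ₂ := by
  ext w
  simp only [campTrans, Set.mem_setOf_eq, Set.mem_union]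
  constructor
  · rintro ⟨j, x, M, p, τ, h1, h2, h3⟩
    by_cases hj : j < χ₁.length
    · left
      exact ⟨j, x, M, p, τ, by rwa [stateAt_append_left H x₀ M₀ χ₁ χ₂ j (le_of_lt hj)] at h1,
        by rwa [List.getElem?_append_left hj] at h2, h3⟩
    · right
      push_neg at hj
      refine ⟨j - χ₁.length, x, M, p, τ, ?_, ?_, h3⟩
      · rw [← stateAt_append_right H χ₁ χ₂ h (j - χ₁.length),
          Nat.add_sub_cancel' hj]
        exact h1
      · rwa [List.getElem?_append_right hj] at h2
  · rintro (⟨j, x, M, p, τ, h1, h2, h3⟩ | ⟨j, x, M, p, τ, h1, h2, h3⟩)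
    · have hj : j < χ₁.length := (List.getElem?_eq_some_iff.mp h2).1
      exact ⟨j, x, M, p, τ, by rwa [stateAt_append_left H x₀ M₀ χ₁ χ₂ j (le_of_lt hj)],
        by rwa [List.getElem?_append_left hj], h3⟩
    · refine ⟨χ₁.length + j, x, M, p, τ, ?_, ?_, h3⟩
      · rw [stateAt_append_right H χ₁ χ₂ h j]; exact h1
      · rw [List.getElem?_append_right (by omega), Nat.add_sub_cancel_left]; exact h2

/-- A block: load a state, then run a trace. -/
private def blk (b : X × ℕ × (ℕ → ℝ) × (ℕ → ℝ)) : List (Cmd X) :=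
  Cmd.load b.1 :: runsList X b.2.2.1 b.2.2.2 b.2.1

/-- The full campaign command list for a list of blocks. -/
private def camp : List (X × ℕ × (ℕ → ℝ) × (ℕ → ℝ)) → List (Cmd X)
  | [] => []
  | b :: L => blk b ++ camp L

private lemma blk_state (H : DES X Y U) {x₀ : X} {M₀ : Set X}
    (b : X × ℕ × (ℕ → ℝ) × (ℕ → ℝ)) (hb : b.1 ∈ M₀) :
    stateAt H x₀ M₀ (blk b) (blk b).length
      = some (scenState H b.1 b.2.2.1 b.2.2.2 b.2.1, M₀) := by
  have hc : simStep H (x₀, M₀) (Cmd.load b.1) = some (b.1, M₀) := by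
    simp [simStep, hb]
  have hlen : (blk b).length = b.2.1 + 1 := by
    simp [blk, runsList]
  rw [hlen, show blk b = Cmd.load b.1 :: runsList X b.2.2.1 b.2.2.2 b.2.1 from rfl,
    stateAt_cons H hc]
  exact stateAt_runs H b.1 M₀ b.2.2.1 b.2.2.2 b.2.1 b.2.1 le_rfl

private lemma blk_campTrans (H : DES X Y U) {x₀ : X} {M₀ : Set X}
    (b : X × ℕ × (ℕ → ℝ) × (ℕ → ℝ)) (hb : b.1 ∈ M₀) :
    campTrans H x₀ M₀ (blk b) = traceTrans H b.1 b.2.1 b.2.2.1 b.2.2.2 := by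
  rw [blk, campTrans_cons_load H hb, campTrans_runs]

private lemma camp_spec (H : DES X Y U) :
    ∀ (L : List (X × ℕ × (ℕ → ℝ) × (ℕ → ℝ))) (x₀ : X) (M₀ : Set X),
    (∀ b ∈ L, b.1 ∈ M₀) →
    ∃ xf, stateAt H x₀ M₀ (camp L) (camp L).length = some (xf, M₀) ∧
      campTrans H x₀ M₀ (camp L)
        = ⋃ b ∈ L, traceTrans H b.1 b.2.1 b.2.2.1 b.2.2.2 := by
  intro L
  induction L with
  | nil =>
    intro x₀ M₀ _
    refine ⟨x₀, rfl, ?_⟩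
    ext w
    simp only [campTrans, camp, Set.mem_setOf_eq, List.not_mem_nil, Set.iUnion_of_empty,
      Set.iUnion_empty, Set.mem_empty_iff_false, iff_false, not_exists]
    intro j x M p τ h
    simp at h
  | cons b L ih =>
    intro x₀ M₀ hmem
    have hb : b.1 ∈ M₀ := hmem b List.mem_cons_self
    have hstate := blk_state H (x₀ := x₀) (M₀ := M₀) b hb
    obtain ⟨xf, hxf, hcamp⟩ :=
      ih (scenState H b.1 b.2.2.1 b.2.2.2 b.2.1) M₀
        (fun b' hb' => hmem b' (List.mem_cons_of_mem b hb'))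
    refine ⟨xf, ?_, ?_⟩
    · have : camp (b :: L) = blk b ++ camp L := rfl
      rw [this, List.length_append,
        stateAt_append_right H (blk b) (camp L) hstate (camp L).length]
      exact hxf
    · have hc : camp (b :: L) = blk b ++ camp L := rfl
      rw [hc, campTrans_append H (blk b) (camp L) hstate, blk_campTrans H b hb, hcamp]
      ext w
      simp only [Set.mem_union, Set.mem_iUnion, List.mem_cons, exists_prop]
      constructor
      · rintro (h | ⟨b', hb', h⟩)
        · exact ⟨b, Or.inl rfl, h⟩
        · exact ⟨b', Or.inr hb', h⟩
      · rintro ⟨b', hb' | hb', h⟩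
        · subst hb'; exact Or.inl h
        · exact Or.inr ⟨b', hb', h⟩

private lemma camp_wf (L : List (X × ℕ × (ℕ → ℝ) × (ℕ → ℝ)))
    (hL : ∀ b ∈ L, ∀ j < b.2.1, b.2.2.1 j ∈ U ∧ 0 < b.2.2.2 j) :
    ∀ c ∈ camp L, c.WF U := by
  induction L with
  | nil => intro c hc; simp [camp] at hc
  | cons b L ih =>
    intro c hc
    rw [show camp (b :: L) = blk b ++ camp L from rfl, List.mem_append] at hc
    rcases hc with hc | hc
    · rw [blk, List.mem_cons] at hc
      rcases hc with rfl | hc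
      · trivial
      · simp only [runsList, List.mem_map, List.mem_range] at hc
        obtain ⟨j, hj, rfl⟩ := hc
        exact (hL b List.mem_cons_self j hj : _)
    · exact ih (fun b' hb' => hL b' (List.mem_cons_of_mem b hb')) c hc

end Sim

/-- **Completeness.** For every finite set `A = {(x 1, u 1), …, (x k, u k)}` of
simulation scenarios for `H` there exists a (valid, finite) simulation campaign
`Ξ = (x₀, M₀, χ)` for the simulator of `H` such that the set of transitions
explored by the campaign is exactly the union of the sets of transitions of the
scenarios: `T_Ξ = ⋃ i, T_(x i, u i)`. -/
theorem completeness
    [Nonempty X] (H : DES X Y U) (hUfin : U.Finite) (hU0 : (0 : ℝ) ∈ U)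
    (k : ℕ) (xs : Fin k → X) (us : Fin k → ℝ → ℝ)
    (hus : ∀ i, IsDiscreteEventSeq U (us i)) :
    ∃ (x₀ : X) (M₀ : Set X) (χ : List (Cmd X)),
      M₀.Finite ∧ (∀ c ∈ χ, c.WF U) ∧
      (stateAt H x₀ M₀ χ χ.length).isSome ∧
      campTrans H x₀ M₀ χ = ⋃ i, scenTrans H (xs i) (us i) := by
  classical
  choose n p τ hdec using fun i => exists_decomp (hus i)
  set L : List (X × ℕ × (ℕ → ℝ) × (ℕ → ℝ)) :=
    List.ofFn (fun i : Fin k => (xs i, n i, p i, τ i)) with hL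
  have hmem : ∀ b ∈ L, b.1 ∈ Set.range xs := by
    intro b hb
    rw [hL, List.mem_ofFn] at hb
    obtain ⟨i, rfl⟩ := hb
    exact ⟨i, rfl⟩
  obtain ⟨xf, hstate, hcamp⟩ := camp_spec H L (Classical.arbitrary X) (Set.range xs) hmem
  refine ⟨Classical.arbitrary X, Set.range xs, camp L, Set.finite_range xs, ?_, ?_, ?_⟩
  · apply camp_wf
    intro b hb j hj
    rw [hL, List.mem_ofFn] at hb
    obtain ⟨i, rfl⟩ := hb
    exact ⟨(hdec i).1 j (le_of_lt hj), (hdec i).2.2.1 j hj⟩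
  · rw [hstate]; rfl
  · rw [hcamp]
    have : ∀ i : Fin k, scenTrans H (xs i) (us i) = traceTrans H (xs i) (n i) (p i) (τ i) :=
      fun i => scenTrans_eq H (xs i) (hdec i)
    ext w
    simp only [Set.mem_iUnion, this, hL, List.mem_ofFn, Set.mem_range, exists_prop]
    constructor
    · rintro ⟨b, ⟨i, rfl⟩, h⟩
      exact ⟨i, h⟩
    · rintro ⟨i, h⟩
      exact ⟨(xs i, n i, p i, τ i), ⟨i, rfl⟩, h⟩
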